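/- Let z1, z2 be real numbers with z1 < 0 and z2 < 0. Then the function G(s) = (R_DR(z1/s, z2/s))^s, where R_DR(z1, z2) = 1 + (z1 + z2)/((1 − z1)(1 − z2)), is strictly monotonically decreasing on [1, ∞), satisfies lim_{s → ∞} G(s) = e^{z1 + z2}, and hence G(s) > e^{z1 + z2} for every real s ≥ 1. -/

import Mathlib

open Filter Real

/-- Lower bound `log x > 2(x-1)/(x+1)` for `x > 1`. -/
private lemma two_div_lt_log {x : ℝ} (hx : 1 < x) : 2*(x-1)/(x+1) < Real.log x := by
  have key : ∀ y : ℝ, 0 < y →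
      HasDerivAt (fun y : ℝ => Real.log y - 2*(y-1)/(y+1)) (1/y - 4/(y+1)^2) y := by
    intro y hy
    have hy1 : y + 1 ≠ 0 := by positivity
    have h1 : HasDerivAt (fun y : ℝ => 2*(y-1)) 2 y := by
      simpa using ((hasDerivAt_id y).sub_const (1:ℝ)).const_mul (2:ℝ)
    have h2 : HasDerivAt (fun y : ℝ => y+1) 1 y := (hasDerivAt_id y).add_const 1
    have h3 := h1.div h2 hy1
    have h4 := Real.hasDerivAt_log (ne_of_gt hy)
    refine (h4.sub h3).congr_deriv ?_
    rw [one_div]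
    congr 1
    rw [div_eq_div_iff (by positivity) (by positivity)]
    ring
  have hmono : StrictMonoOn (fun y : ℝ => Real.log y - 2*(y-1)/(y+1)) (Set.Ici 1) := by
    apply strictMonoOn_of_deriv_pos (convex_Ici 1)
    · exact fun y hy =>
        ((key y (lt_of_lt_of_le one_pos hy)).continuousAt).continuousWithinAt
    · intro y hy
      rw [interior_Ici] at hy
      have hy0 : (0:ℝ) < y := lt_trans one_pos hy
      rw [(key y hy0).deriv]
      have heq : 1/y - 4/(y+1)^2 = (y-1)^2 / (y*(y+1)^2) := by
        field_simp
        ring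
      rw [heq]
      exact div_pos (pow_pos (sub_pos.mpr hy) 2) (by positivity)
  have h := hmono Set.self_mem_Ici (Set.mem_Ici.mpr hx.le) hx
  simp only [Real.log_one] at h
  norm_num at h
  linarith

/-- Negativity of the derivative of `s ↦ s * log R_DR(z1/s, z2/s)`. -/
private lemma DR_deriv_neg (z1 z2 s : ℝ) (h1 : z1 < 0) (h2 : z2 < 0) (hs : 0 < s) :
    (Real.log (s^2 + z1*z2) - Real.log (s - z1) - Real.log (s - z2))
      + s * (2*s/(s^2 + z1*z2) - 1/(s - z1) - 1/(s - z2)) < 0 := by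
  have hp : 0 < z1*z2 := mul_pos_of_neg_of_neg h1 h2
  have hA : 0 < s^2 + z1*z2 := by positivity
  have hb1 : 0 < s - z1 := by linarith
  have hb2 : 0 < s - z2 := by linarith
  have hB : 0 < (s - z1)*(s - z2) := mul_pos hb1 hb2
  have hc : 0 < -(z1 + z2) := by linarith
  have hgt1 : 1 < (s - z1)*(s - z2)/(s^2 + z1*z2) := by
    rw [lt_div_iff₀ hA]
    nlinarith
  have hlog := two_div_lt_log hgt1
  have hlogsplit : Real.log ((s - z1)*(s - z2)/(s^2 + z1*z2))
      = Real.log (s - z1) + Real.log (s - z2) - Real.log (s^2 + z1*z2) := by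
    rw [Real.log_div (ne_of_gt hB) (ne_of_gt hA), Real.log_mul (ne_of_gt hb1) (ne_of_gt hb2)]
  have hfrac : 2*((s - z1)*(s - z2)/(s^2 + z1*z2) - 1)/((s - z1)*(s - z2)/(s^2 + z1*z2) + 1)
      = 2*(-(z1+z2)*s)/((s^2 + z1*z2) + (s - z1)*(s - z2)) := by
    rw [div_eq_div_iff]
    · field_simp
      ring
    · positivity
    · positivity
  have hrat : s * (2*s/(s^2 + z1*z2) - 1/(s - z1) - 1/(s - z2))
      = -(z1+z2)*s*(s^2 - z1*z2)/((s^2 + z1*z2) * ((s - z1)*(s - z2))) := by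
    field_simp
    ring
  rw [hrat]
  rw [hlogsplit, hfrac] at hlog
  have hkey : -(z1+z2)*s*(s^2 - z1*z2)/((s^2 + z1*z2) * ((s - z1)*(s - z2)))
      ≤ 2*(-(z1+z2)*s)/((s^2 + z1*z2) + (s - z1)*(s - z2)) := by
    rw [div_le_div_iff₀ (by positivity) (by positivity)]
    nlinarith [mul_pos (mul_pos hc hs)
      (by positivity : (0:ℝ) < (s^2 + z1*z2)*(-(z1+z2)*s)
        + 4*(z1*z2)*(s^2+z1*z2) + 2*(z1*z2)*(-(z1+z2)*s))]
  linarith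

open Filter in
/-- The function `G(s) = (R_DR(z1/s, z2/s))^s` is strictly decreasing on `[1, ∞)`,
tends to `e^{z1+z2}` as `s → ∞`, and hence exceeds `e^{z1+z2}` for all `s ≥ 1`. -/
theorem DR_power_decrease_limit_gt (z1 z2 : ℝ) (h1 : z1 < 0) (h2 : z2 < 0) :
    StrictAntiOn
      (fun s : ℝ => (1 + (z1 / s + z2 / s) / ((1 - z1 / s) * (1 - z2 / s))) ^ s)
      (Set.Ici (1 : ℝ)) ∧
    Tendsto
      (fun s : ℝ => (1 + (z1 / s + z2 / s) / ((1 - z1 / s) * (1 - z2 / s))) ^ s)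
      atTop (nhds (Real.exp (z1 + z2))) ∧
    ∀ s : ℝ, 1 ≤ s →
      Real.exp (z1 + z2) <
        (1 + (z1 / s + z2 / s) / ((1 - z1 / s) * (1 - z2 / s))) ^ s := by
  have hp : 0 < z1*z2 := mul_pos_of_neg_of_neg h1 h2
  set G : ℝ → ℝ :=
    fun s : ℝ => (1 + (z1 / s + z2 / s) / ((1 - z1 / s) * (1 - z2 / s))) ^ s with hGdef
  set φ : ℝ → ℝ :=
    fun s => s * (Real.log (s^2 + z1*z2) - Real.log (s - z1) - Real.log (s - z2)) with hφ
  -- rewriting the base as a single fraction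
  have base_eq : ∀ s : ℝ, 0 < s →
      1 + (z1 / s + z2 / s) / ((1 - z1 / s) * (1 - z2 / s))
        = (s^2 + z1*z2) / ((s - z1)*(s - z2)) := by
    intro s hs
    have hs0 : s ≠ 0 := ne_of_gt hs
    have hb1 : (1 : ℝ) - z1/s ≠ 0 := by
      have : z1/s < 0 := div_neg_of_neg_of_pos h1 hs
      have : 0 < 1 - z1/s := by linarith
      exact ne_of_gt this
    have hb2 : (1 : ℝ) - z2/s ≠ 0 := by
      have : z2/s < 0 := div_neg_of_neg_of_pos h2 hs
      have : 0 < 1 - z2/s := by linarith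
      exact ne_of_gt this
    have hz1 : s - z1 ≠ 0 := by intro h; nlinarith
    have hz2 : s - z2 ≠ 0 := by intro h; nlinarith
    field_simp
    ring
  -- G = exp ∘ φ on positive reals
  have hG : ∀ s : ℝ, 0 < s → G s = Real.exp (φ s) := by
    intro s hs
    have hA : 0 < s^2 + z1*z2 := by positivity
    have hb1 : 0 < s - z1 := by linarith
    have hb2 : 0 < s - z2 := by linarith
    simp only [hGdef, hφ]
    rw [base_eq s hs, Real.rpow_def_of_pos (by positivity)]
    congr 1
    rw [Real.log_div (ne_of_gt hA) (by positivity), Real.log_mul (ne_of_gt hb1) (ne_of_gt hb2)]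
    ring
  -- derivative of φ
  have hderiv : ∀ s : ℝ, 0 < s →
      HasDerivAt φ
        ((Real.log (s^2 + z1*z2) - Real.log (s - z1) - Real.log (s - z2))
          + s * (2*s/(s^2 + z1*z2) - 1/(s - z1) - 1/(s - z2))) s := by
    intro s hs
    have hA : 0 < s^2 + z1*z2 := by positivity
    have hb1 : 0 < s - z1 := by linarith
    have hb2 : 0 < s - z2 := by linarith
    have hsq : HasDerivAt (fun s : ℝ => s^2 + z1*z2) (2*s) s := by
      simpa using (hasDerivAt_pow 2 s).add_const (z1*z2)
    have hlogA := hsq.log (ne_of_gt hA)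
    have hlog1 : HasDerivAt (fun s : ℝ => Real.log (s - z1)) (1/(s - z1)) s := by
      simpa using ((hasDerivAt_id s).sub_const z1).log (ne_of_gt hb1)
    have hlog2 : HasDerivAt (fun s : ℝ => Real.log (s - z2)) (1/(s - z2)) s := by
      simpa using ((hasDerivAt_id s).sub_const z2).log (ne_of_gt hb2)
    have hinner := (hlogA.sub hlog1).sub hlog2
    have := (hasDerivAt_id s).mul hinner
    exact this.congr_deriv (by simp)
  -- φ is strictly decreasing on [1, ∞)
  have hφanti : StrictAntiOn φ (Set.Ici 1) := by
    apply strictAntiOn_of_deriv_neg (convex_Ici 1)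
    · exact fun s hs =>
        ((hderiv s (lt_of_lt_of_le one_pos hs)).continuousAt).continuousWithinAt
    · intro s hs
      rw [interior_Ici] at hs
      have hs0 : (0:ℝ) < s := lt_trans one_pos hs
      rw [(hderiv s hs0).deriv]
      exact DR_deriv_neg z1 z2 s h1 h2 hs0
  -- part 1: G strictly decreasing
  have hanti : StrictAntiOn G (Set.Ici 1) := by
    intro x hx y hy hxy
    have hx0 : (0:ℝ) < x := lt_of_lt_of_le one_pos hx
    have hy0 : (0:ℝ) < y := lt_of_lt_of_le one_pos hy
    rw [hG x hx0, hG y hy0]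
    exact Real.exp_lt_exp.mpr (hφanti hx hy hxy)
  -- part 2: the limit
  have htend : Tendsto G atTop (nhds (Real.exp (z1 + z2))) := by
    have hψ : Tendsto φ atTop (nhds (z1 + z2)) := by
      have hT1 : Tendsto (fun s : ℝ => s * Real.log (1 + (z1*z2)/s^2)) atTop (nhds 0) := by
        have hub : Tendsto (fun s : ℝ => z1*z2/s) atTop (nhds 0) :=
          tendsto_const_nhds.div_atTop tendsto_id
        apply tendsto_of_tendsto_of_tendsto_of_le_of_le' tendsto_const_nhds hub
        · filter_upwards [eventually_gt_atTop (0:ℝ)] with s hs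
          have : (0:ℝ) ≤ z1*z2/s^2 := by positivity
          exact mul_nonneg hs.le (Real.log_nonneg (by linarith))
        · filter_upwards [eventually_gt_atTop (0:ℝ)] with s hs
          have hx : (0:ℝ) < 1 + z1*z2/s^2 := by positivity
          have := Real.log_le_sub_one_of_pos hx
          calc s * Real.log (1 + z1*z2/s^2) ≤ s * (z1*z2/s^2) := by
                apply mul_le_mul_of_nonneg_left _ hs.le
                linarith
            _ = z1*z2/s := by field_simp
      have hT2 := Real.tendsto_mul_log_one_add_div_atTop (-z1)
      have hT3 := Real.tendsto_mul_log_one_add_div_atTop (-z2)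
      have hcomb := (hT1.sub hT2).sub hT3
      have heq : (fun s : ℝ => s * Real.log (1 + (z1*z2)/s^2)
          - s * Real.log (1 + (-z1)/s) - s * Real.log (1 + (-z2)/s)) =ᶠ[atTop] φ := by
        filter_upwards [eventually_gt_atTop (0:ℝ)] with s hs
        have hs0 : s ≠ 0 := ne_of_gt hs
        have hA : 0 < s^2 + z1*z2 := by positivity
        have hb1 : 0 < s - z1 := by linarith
        have hb2 : 0 < s - z2 := by linarith
        have e1 : (1:ℝ) + z1*z2/s^2 = (s^2 + z1*z2)/s^2 := by field_simp
        have e2 : (1:ℝ) + (-z1)/s = (s - z1)/s := by field_simp; ring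
        have e3 : (1:ℝ) + (-z2)/s = (s - z2)/s := by field_simp; ring
        simp only [hφ]
        rw [e1, e2, e3, Real.log_div (ne_of_gt hA) (by positivity),
          Real.log_div (ne_of_gt hb1) hs0, Real.log_div (ne_of_gt hb2) hs0,
          Real.log_pow]
        push_cast
        ring
      have := hcomb.congr' heq
      simpa using this
    have hcomp := (Real.continuous_exp.tendsto (z1 + z2)).comp hψ
    apply hcomp.congr'
    filter_upwards [eventually_ge_atTop (1:ℝ)] with s hs
    exact (hG s (lt_of_lt_of_le one_pos hs)).symm
  refine ⟨hanti, htend, fun s hs => ?_⟩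
  -- part 3: the strict lower bound
  have hmem : s ∈ Set.Ici (1:ℝ) := hs
  have hmem' : s + 1 ∈ Set.Ici (1:ℝ) := by simp; linarith
  have hlt : G (s + 1) < G s := hanti hmem hmem' (lt_add_one s)
  have hle : Real.exp (z1 + z2) ≤ G (s + 1) := by
    apply le_of_tendsto htend
    filter_upwards [eventually_ge_atTop (s+1)] with u hu
    exact hanti.antitoneOn hmem' (by simp at hmem' ⊢; linarith) hu
  exact lt_of_le_of_lt hle hlt
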